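/- Let (Ω, μ) be a probability space and u : Ω → ℝ measurable with u > 0 μ-almost everywhere and u integrable. Define g_m(x) = (1/2)·E[u·exp(−u·|x − m|)] for m ∈ {0, 1} and M(t) = E[exp(t·u)]. Then the Kullback–Leibler divergence satisfies ∫_ℝ g_0(x)·ln( g_0(x)/g_1(x) ) dx ≤ E[u] + M(−1) − 1. That is, the R²DP Laplace mechanism applied to a query of sensitivity 1 satisfies (1, ε)-Rényi differential privacy with ε = M'(0) + M(−1) − 1, where M'(0) = E[u]. -/

import Mathlib

open MeasureTheory Real Set Filter Topology

namespace R2DP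


lemma abs_diff_le (x : ℝ) : |(|x - 1| - |x|)| ≤ 1 := by
  have := abs_abs_sub_abs_le_abs_sub (x - 1) x
  simpa using this

lemma integrableOn_exp_abs_Ioi {t : ℝ} (ht : 0 < t) (a : ℝ) :
    IntegrableOn (fun x : ℝ => Real.exp (-t * |x|)) (Ioi a) := by
  refine (exp_neg_integrableOn_Ioi a ht).mono' ?_ ?_
  · exact (Continuous.aestronglyMeasurable (by fun_prop))
  · filter_upwards with x
    rw [Real.norm_eq_abs, abs_of_pos (exp_pos _)]
    exact exp_le_exp.2 (by nlinarith [le_abs_self x, ht.le])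

lemma integrable_exp_abs {t : ℝ} (ht : 0 < t) :
    Integrable (fun x : ℝ => Real.exp (-t * |x|)) := by
  have hIoi := integrableOn_exp_abs_Ioi ht 0
  have hIic : IntegrableOn (fun x : ℝ => Real.exp (-t * |x|)) (Iic 0) := by
    rw [← Measure.map_neg_eq_self (volume : Measure ℝ)]
    have m : MeasurableEmbedding fun x : ℝ => -x := (Homeomorph.neg ℝ).measurableEmbedding
    rw [m.integrableOn_map_iff]
    simp_rw [Function.comp_def, abs_neg, neg_preimage, neg_Iic, neg_zero]
    exact Iff.mpr integrableOn_Ici_iff_integrableOn_Ioi hIoi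
  rw [← integrableOn_univ, ← Iic_union_Ioi (a := (0:ℝ))]
  exact hIic.union hIoi

lemma integrable_kern {t : ℝ} (ht : 0 < t) :
    Integrable (fun x : ℝ => t ^ 2 * Real.exp (-t * |x|) * (|x - 1| - |x|)) := by
  refine ((integrable_exp_abs ht).const_mul (t ^ 2)).mono'
    (Continuous.aestronglyMeasurable (by fun_prop)) ?_
  filter_upwards with x
  rw [Real.norm_eq_abs, abs_mul]
  calc |t ^ 2 * Real.exp (-t * |x|)| * |(|x - 1| - |x|)|
      ≤ |t ^ 2 * Real.exp (-t * |x|)| * 1 := by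
        exact mul_le_mul_of_nonneg_left (abs_diff_le x) (abs_nonneg _)
    _ = t ^ 2 * Real.exp (-t * |x|) := by
        rw [mul_one, abs_of_nonneg (by positivity)]

lemma integral_exp_Ioi {t : ℝ} (ht : 0 < t) (a : ℝ) :
    ∫ x in Ioi a, Real.exp (-t * x) = Real.exp (-t * a) / t := by
  have h := integral_Ioi_of_hasDerivAt_of_tendsto' (a := a) (m := 0)
    (f := fun x => -Real.exp (-t * x) / t) (f' := fun x => Real.exp (-t * x))
    (fun x _ => ?_) (exp_neg_integrableOn_Ioi a ht) ?_
  · rw [h]; ring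
  · have : HasDerivAt (fun x => Real.exp (-t * x)) (Real.exp (-t * x) * (-t * 1)) x :=
      ((hasDerivAt_id x).const_mul (-t)).exp
    have h2 := (this.neg).div_const t
    exact h2.congr_deriv (by field_simp)
  · have : Tendsto (fun x => Real.exp (-t * x)) atTop (𝓝 0) :=
      tendsto_exp_atBot.comp (tendsto_id.const_mul_atTop_of_neg (by linarith))
    simpa using (this.neg).div_const t

lemma integral_exp_abs_total {t : ℝ} (ht : 0 < t) :
    ∫ x : ℝ, Real.exp (-t * |x|) = 2 / t := by
  rw [integral_comp_abs (f := fun x => Real.exp (-t * x)), integral_exp_Ioi ht 0]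
  norm_num
  ring

lemma integral_exp_Iic' {t : ℝ} (ht : 0 < t) :
    ∫ x in Iic (0:ℝ), Real.exp (t * x) = 1 / t := by
  have h := integral_Iic_of_hasDerivAt_of_tendsto' (a := (0:ℝ)) (m := 0)
    (f := fun x => Real.exp (t * x) / t) (f' := fun x => Real.exp (t * x))
    (fun x _ => ?_) ?_ ?_
  · rw [h]; norm_num
  · have : HasDerivAt (fun x => Real.exp (t * x)) (Real.exp (t * x) * (t * 1)) x :=
      ((hasDerivAt_id x).const_mul t).exp
    have h2 := this.div_const t
    exact h2.congr_deriv (by field_simp)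
  · -- IntegrableOn (fun x => exp (t*x)) (Iic 0)
    rw [← Measure.map_neg_eq_self (volume : Measure ℝ)]
    have m : MeasurableEmbedding fun x : ℝ => -x := (Homeomorph.neg ℝ).measurableEmbedding
    rw [m.integrableOn_map_iff]
    simp_rw [Function.comp_def, neg_preimage, neg_Iic, neg_zero, mul_neg, ← neg_mul]
    exact Iff.mpr integrableOn_Ici_iff_integrableOn_Ioi (exp_neg_integrableOn_Ioi 0 ht)
  · have : Tendsto (fun x : ℝ => Real.exp (t * x)) atBot (𝓝 0) :=
      tendsto_exp_atBot.comp (by exact tendsto_id.const_mul_atBot ht)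
    simpa using this.div_const t

lemma key_integral {t : ℝ} (ht : 0 < t) :
    ∫ x : ℝ, t ^ 2 * Real.exp (-t * |x|) * (|x - 1| - |x|)
      = 2 * (t + Real.exp (-t) - 1) := by
  set f : ℝ → ℝ := fun x => t ^ 2 * Real.exp (-t * |x|) * (|x - 1| - |x|) with hf
  have hfi : Integrable f := integrable_kern ht
  have hsplit : ∫ x : ℝ, f x = (∫ x in Iic (0:ℝ), f x) + ∫ x in Ioi (0:ℝ), f x := by
    rw [← setIntegral_union (Iic_disjoint_Ioi le_rfl) measurableSet_Ioi
      hfi.integrableOn hfi.integrableOn, Iic_union_Ioi, Measure.restrict_univ]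
  have hsplit2 : ∫ x in Ioi (0:ℝ), f x
      = (∫ x in Ioc (0:ℝ) 1, f x) + ∫ x in Ioi (1:ℝ), f x := by
    rw [← setIntegral_union (Ioc_disjoint_Ioi le_rfl) measurableSet_Ioi
      hfi.integrableOn hfi.integrableOn, Ioc_union_Ioi_eq_Ioi zero_le_one]
  have h1 : ∫ x in Iic (0:ℝ), f x = t := by
    have : ∫ x in Iic (0:ℝ), f x = ∫ x in Iic (0:ℝ), t ^ 2 * Real.exp (t * x) := by
      refine setIntegral_congr_fun measurableSet_Iic (fun x hx => ?_)
      have hx' : x ≤ 0 := hx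
      rw [hf]
      simp only
      rw [abs_of_nonpos hx', abs_of_nonpos (by linarith : x - 1 ≤ 0)]
      ring_nf
    rw [this, integral_const_mul, integral_exp_Iic' ht]
    field_simp
  have h3 : ∫ x in Ioi (1:ℝ), f x = -(t * Real.exp (-t)) := by
    have : ∫ x in Ioi (1:ℝ), f x = ∫ x in Ioi (1:ℝ), -(t ^ 2 * Real.exp (-t * x)) := by
      refine setIntegral_congr_fun measurableSet_Ioi (fun x hx => ?_)
      have hx' : (1:ℝ) < x := hx
      rw [hf]
      simp only
      rw [abs_of_pos (by linarith : (0:ℝ) < x), abs_of_pos (by linarith : (0:ℝ) < x - 1)]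
      ring_nf
    rw [this, integral_neg, integral_const_mul, integral_exp_Ioi ht 1]
    field_simp
  have h2 : ∫ x in Ioc (0:ℝ) 1, f x = Real.exp (-t) * (t + 2) - 2 + t := by
    have he : ∫ x in Ioc (0:ℝ) 1, f x
        = ∫ x in Ioc (0:ℝ) 1, t ^ 2 * Real.exp (-t * x) * (1 - 2 * x) := by
      refine setIntegral_congr_fun measurableSet_Ioc (fun x hx => ?_)
      obtain ⟨hx0, hx1⟩ := hx
      rw [hf]
      simp only
      rw [abs_of_pos hx0, abs_of_nonpos (by linarith : x - 1 ≤ 0)]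
      ring_nf
    rw [he, ← intervalIntegral.integral_of_le zero_le_one]
    have hderiv : ∀ x ∈ uIcc (0:ℝ) 1,
        HasDerivAt (fun x => Real.exp (-t * x) * (2 * t * x + 2 - t))
          (t ^ 2 * Real.exp (-t * x) * (1 - 2 * x)) x := by
      intro x _
      have d1 : HasDerivAt (fun x => Real.exp (-t * x)) (Real.exp (-t * x) * (-t * 1)) x :=
        ((hasDerivAt_id x).const_mul (-t)).exp
      have d2 : HasDerivAt (fun x : ℝ => 2 * t * x + 2 - t) (2 * t) x := by
        have := ((hasDerivAt_id x).const_mul (2 * t)).add_const (2 - t)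
        simp only [mul_one] at this
        refine this.congr_of_eventuallyEq (Filter.Eventually.of_forall fun y => ?_)
        simp only [id]
        ring
      have := d1.mul d2
      exact this.congr_deriv (by ring)
    rw [intervalIntegral.integral_eq_sub_of_hasDerivAt hderiv
      (Continuous.intervalIntegrable (by fun_prop) 0 1)]
    simp only [mul_one, mul_zero, neg_zero, Real.exp_zero]
    ring_nf
  rw [hsplit, hsplit2, h1, h2, h3]
  ring


variable {Ω : Type*} [MeasurableSpace Ω] {μ : Measure Ω}

lemma integral_pos_of_ae_pos [IsProbabilityMeasure μ] {f : Ω → ℝ}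
    (hf : Integrable f μ) (hpos : ∀ᵐ ω ∂μ, 0 < f ω) : 0 < ∫ ω, f ω ∂μ := by
  refine (integral_pos_iff_support_of_nonneg_ae (hpos.mono fun ω h => h.le) hf).2 ?_
  have hnull : μ (Function.support f)ᶜ = 0 := by
    refine measure_mono_null (fun ω hω => ?_) (ae_iff.1 hpos)
    simp only [Function.mem_support, not_not, mem_compl_iff, mem_setOf_eq] at hω ⊢
    simp [hω]
  by_contra h0
  push_neg at h0
  have h0' : μ (Function.support f) = 0 := le_antisymm h0 zero_le
  have : μ (univ : Set Ω) = 0 := by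
    rw [← union_compl_self (Function.support f)]
    exact le_antisymm (le_trans (measure_union_le _ _) (by rw [h0', hnull]; simp)) zero_le
  simp [measure_univ] at this

lemma logsum [IsProbabilityMeasure μ] (u : Ω → ℝ) (hu : Measurable u)
    (hupos : ∀ᵐ ω ∂μ, 0 < u ω) (huint : Integrable u μ) {x : ℝ} (hx : x ≠ 0) :
    (∫ ω, u ω * Real.exp (-(u ω) * |x|) ∂μ) *
      Real.log ((∫ ω, u ω * Real.exp (-(u ω) * |x|) ∂μ) /
        (∫ ω, u ω * Real.exp (-(u ω) * |x - 1|) ∂μ))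
    ≤ ∫ ω, (u ω) ^ 2 * Real.exp (-(u ω) * |x|) * (|x - 1| - |x|) ∂μ := by
  set f : Ω → ℝ := fun ω => u ω * Real.exp (-(u ω) * |x|) with hfdef
  set g : Ω → ℝ := fun ω => u ω * Real.exp (-(u ω) * |x - 1|) with hgdef
  set φ : Ω → ℝ := fun ω => (u ω) ^ 2 * Real.exp (-(u ω) * |x|) * (|x - 1| - |x|) with hφdef
  have hfm : AEStronglyMeasurable f μ :=
    (hu.mul ((hu.neg.mul_const _).exp)).aestronglyMeasurable
  have hgm : AEStronglyMeasurable g μ :=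
    (hu.mul ((hu.neg.mul_const _).exp)).aestronglyMeasurable
  have hφm : AEStronglyMeasurable φ μ :=
    (((hu.pow_const 2).mul ((hu.neg.mul_const _).exp)).mul_const _).aestronglyMeasurable
  have hfint : Integrable f μ := by
    refine huint.mono' hfm ?_
    filter_upwards [hupos] with ω hω
    rw [Real.norm_eq_abs, abs_of_nonneg (by positivity)]
    have h1 : Real.exp (-(u ω) * |x|) ≤ 1 :=
      Real.exp_le_one_iff.2 (by nlinarith [abs_nonneg x])
    calc u ω * Real.exp (-(u ω) * |x|) ≤ u ω * 1 := mul_le_mul_of_nonneg_left h1 hω.le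
      _ = u ω := mul_one _
  have hgint : Integrable g μ := by
    refine huint.mono' hgm ?_
    filter_upwards [hupos] with ω hω
    rw [Real.norm_eq_abs, abs_of_nonneg (by positivity)]
    have h1 : Real.exp (-(u ω) * |x - 1|) ≤ 1 :=
      Real.exp_le_one_iff.2 (by nlinarith [abs_nonneg (x - 1)])
    calc u ω * Real.exp (-(u ω) * |x - 1|) ≤ u ω * 1 := mul_le_mul_of_nonneg_left h1 hω.le
      _ = u ω := mul_one _
  have hxabs : 0 < |x| := abs_pos.2 hx
  have hφint : Integrable φ μ := by
    refine (huint.const_mul (1 / |x|)).mono' hφm ?_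
    filter_upwards [hupos] with ω hω
    have he : Real.exp (-(u ω) * |x|) ≤ 1 / (u ω * |x|) := by
      rw [neg_mul, Real.exp_neg, inv_eq_one_div]
      refine one_div_le_one_div_of_le (mul_pos hω hxabs) ?_
      calc u ω * |x| ≤ u ω * |x| + 1 := by linarith
        _ ≤ Real.exp (u ω * |x|) := Real.add_one_le_exp _
    rw [Real.norm_eq_abs, abs_mul]
    calc |(u ω) ^ 2 * Real.exp (-(u ω) * |x|)| * |(|x - 1| - |x|)|
        ≤ (u ω) ^ 2 * (1 / (u ω * |x|)) * 1 := by
          refine mul_le_mul ?_ ?_ (abs_nonneg _) (by positivity)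
          · rw [abs_of_nonneg (by positivity)]
            exact mul_le_mul_of_nonneg_left he (by positivity)
          · have := abs_abs_sub_abs_le_abs_sub (x - 1) x
            simpa using this
      _ = 1 / |x| * u ω := by field_simp
  set A : ℝ := ∫ ω, f ω ∂μ with hA
  set B : ℝ := ∫ ω, g ω ∂μ with hB
  have hA0 : 0 < A := integral_pos_of_ae_pos hfint
    (hupos.mono fun ω h => mul_pos h (exp_pos _))
  have hB0 : 0 < B := integral_pos_of_ae_pos hgint
    (hupos.mono fun ω h => mul_pos h (exp_pos _))
  -- pointwise inequality
  have hpt : ∀ᵐ ω ∂μ, f ω * Real.log (A / B) ≤ φ ω - f ω + g ω * (A / B) := by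
    filter_upwards [hupos] with ω hω
    have hf0 : 0 < f ω := mul_pos hω (exp_pos _)
    have hg0 : 0 < g ω := mul_pos hω (exp_pos _)
    have hlog : Real.log ((g ω * A) / (f ω * B)) ≤ (g ω * A) / (f ω * B) - 1 :=
      Real.log_le_sub_one_of_pos (by positivity)
    have hsplit : Real.log ((g ω * A) / (f ω * B))
        = Real.log (A / B) - u ω * (|x - 1| - |x|) := by
      have hgf : g ω / f ω = Real.exp (u ω * |x| - u ω * |x - 1|) := by
        rw [hfdef, hgdef]
        simp only
        rw [mul_div_mul_left _ _ (ne_of_gt hω), ← Real.exp_sub]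
        ring_nf
      have : (g ω * A) / (f ω * B) = (g ω / f ω) * (A / B) := by
        field_simp
      rw [this, Real.log_mul (by positivity) (by positivity), hgf, Real.log_exp]
      ring
    rw [hsplit] at hlog
    have hmul := mul_le_mul_of_nonneg_left hlog hf0.le
    have hfφ : f ω * (u ω * (|x - 1| - |x|)) = φ ω := by
      rw [hfdef, hφdef]; ring
    have hfg : f ω * ((g ω * A) / (f ω * B)) = g ω * (A / B) := by
      field_simp
    nlinarith [hmul, hfφ, hfg]
  -- integrate
  have hrhsint : Integrable (fun ω => φ ω - f ω + g ω * (A / B)) μ :=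
    (hφint.sub hfint).add (hgint.mul_const _)
  have hint := integral_mono_ae (hfint.mul_const (Real.log (A / B))) hrhsint hpt
  rw [integral_mul_const] at hint
  have hsub : Integrable (fun ω => φ ω - f ω) μ := hφint.sub hfint
  have hg2 : (∫ a, g a * (A / B) ∂μ) = B * (A / B) := by
    rw [integral_mul_const]
  rw [integral_add hsub (hgint.mul_const _), integral_sub hφint hfint, hg2] at hint
  have hBA : B * (A / B) = A := by field_simp
  calc A * Real.log (A / B) ≤ (∫ ω, φ ω ∂μ) - A + B * (A / B) := hint
    _ = ∫ ω, φ ω ∂μ := by rw [hBA]; ring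


variable {Ω : Type*} [MeasurableSpace Ω] {μ : Measure Ω}


lemma prod_integrable [IsProbabilityMeasure μ] (u : Ω → ℝ) (hu : Measurable u)
    (hupos : ∀ᵐ ω ∂μ, 0 < u ω) (huint : Integrable u μ) :
    Integrable (Function.uncurry fun ω x =>
      (u ω) ^ 2 * Real.exp (-(u ω) * |x|) * (|x - 1| - |x|)) (μ.prod volume) := by
  have hmeas : Measurable (Function.uncurry fun (ω : Ω) (x : ℝ) =>
      (u ω) ^ 2 * Real.exp (-(u ω) * |x|) * (|x - 1| - |x|)) := by
    apply Measurable.mul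
    · exact ((hu.comp measurable_fst).pow_const 2).mul
        (((hu.comp measurable_fst).neg.mul measurable_snd.abs).exp)
    · exact ((measurable_snd.sub_const 1).abs.sub measurable_snd.abs)
  rw [integrable_prod_iff hmeas.aestronglyMeasurable]
  constructor
  · filter_upwards [hupos] with ω hω
    exact integrable_kern hω
  · refine (huint.const_mul 2).mono'
      hmeas.aestronglyMeasurable.norm.integral_prod_right' ?_
    filter_upwards [hupos] with ω hω
    have hptw : ∀ x : ℝ, ‖(u ω) ^ 2 * Real.exp (-(u ω) * |x|) * (|x - 1| - |x|)‖
        ≤ (u ω) ^ 2 * Real.exp (-(u ω) * |x|) := by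
      intro x
      rw [Real.norm_eq_abs, abs_mul]
      calc |(u ω) ^ 2 * Real.exp (-(u ω) * |x|)| * |(|x - 1| - |x|)|
          ≤ |(u ω) ^ 2 * Real.exp (-(u ω) * |x|)| * 1 := by
            refine mul_le_mul_of_nonneg_left ?_ (abs_nonneg _)
            have := abs_abs_sub_abs_le_abs_sub (x - 1) x
            simpa using this
        _ = (u ω) ^ 2 * Real.exp (-(u ω) * |x|) := by
            rw [mul_one, abs_of_nonneg (by positivity)]
    have h1 : (∫ x : ℝ, ‖(u ω) ^ 2 * Real.exp (-(u ω) * |x|) * (|x - 1| - |x|)‖)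
        ≤ ∫ x : ℝ, (u ω) ^ 2 * Real.exp (-(u ω) * |x|) := by
      refine integral_mono (integrable_kern hω).norm
        ((integrable_exp_abs hω).const_mul _) hptw
    have h2 : (∫ x : ℝ, (u ω) ^ 2 * Real.exp (-(u ω) * |x|)) = 2 * u ω := by
      rw [integral_const_mul, integral_exp_abs_total hω]
      field_simp
    rw [Real.norm_eq_abs, abs_of_nonneg (integral_nonneg fun x => norm_nonneg _)]
    calc (∫ x : ℝ, ‖(u ω) ^ 2 * Real.exp (-(u ω) * |x|) * (|x - 1| - |x|)‖)
        ≤ (2:ℝ) * u ω := by rw [← h2]; exact h1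

lemma integral_h [IsProbabilityMeasure μ] (u : Ω → ℝ) (hu : Measurable u)
    (hupos : ∀ᵐ ω ∂μ, 0 < u ω) (huint : Integrable u μ) :
    ∫ x : ℝ, (∫ ω, (u ω) ^ 2 * Real.exp (-(u ω) * |x|) * (|x - 1| - |x|) ∂μ)
      = 2 * ((∫ ω, u ω ∂μ) + (∫ ω, Real.exp (-u ω) ∂μ) - 1) := by
  have hprod := prod_integrable u hu hupos huint
  rw [← integral_integral_swap hprod]
  have hinner : ∀ᵐ ω ∂μ, (∫ x : ℝ, (u ω) ^ 2 * Real.exp (-(u ω) * |x|) * (|x - 1| - |x|))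
      = 2 * (u ω + Real.exp (-u ω) - 1) := by
    filter_upwards [hupos] with ω hω
    exact key_integral hω
  rw [integral_congr_ae hinner]
  have hexpint : Integrable (fun ω => Real.exp (-u ω)) μ := by
    refine (integrable_const (1:ℝ)).mono' (hu.neg.exp.aestronglyMeasurable) ?_
    filter_upwards [hupos] with ω hω
    rw [Real.norm_eq_abs, abs_of_pos (exp_pos _)]
    exact Real.exp_le_one_iff.2 (by linarith)
  rw [integral_const_mul]
  congr 1
  have hadd : Integrable (fun ω => u ω + Real.exp (-u ω)) μ := huint.add hexpint
  rw [integral_sub hadd (integrable_const 1), integral_add huint hexpint]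
  simp


end R2DP

open R2DP in
/-- The R²DP Laplace mechanism applied to a query of sensitivity 1 satisfies
`(1, ε)`-Rényi differential privacy with `ε = M'(0) + M(-1) - 1 = E[u] + E[exp(-u)] - 1`:
the Kullback–Leibler divergence between the output densities at locations `0` and `1`
is bounded by `E[u] + M(-1) - 1`. -/
theorem r2dp_kl_dp {Ω : Type*} [MeasurableSpace Ω] (μ : Measure Ω)
    [IsProbabilityMeasure μ] (u : Ω → ℝ) (hu : Measurable u)
    (hupos : ∀ᵐ ω ∂μ, 0 < u ω) (huint : Integrable u μ) :
    (∫ x : ℝ, ((1 / 2) * ∫ ω, u ω * Real.exp (-(u ω) * |x - 0|) ∂μ) *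
        Real.log (((1 / 2) * ∫ ω, u ω * Real.exp (-(u ω) * |x - 0|) ∂μ) /
          ((1 / 2) * ∫ ω, u ω * Real.exp (-(u ω) * |x - 1|) ∂μ))) ≤
      (∫ ω, u ω ∂μ) + (∫ ω, Real.exp (-u ω) ∂μ) - 1 := by
  have hexpint : Integrable (fun ω => Real.exp (-u ω)) μ := by
    refine (integrable_const (1:ℝ)).mono' (hu.neg.exp.aestronglyMeasurable) ?_
    filter_upwards [hupos] with ω hω
    rw [Real.norm_eq_abs, abs_of_pos (exp_pos _)]
    exact Real.exp_le_one_iff.2 (by linarith)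
  have hRHS0 : 0 ≤ (∫ ω, u ω ∂μ) + (∫ ω, Real.exp (-u ω) ∂μ) - 1 := by
    have hadd : Integrable (fun ω => u ω + Real.exp (-u ω)) μ := huint.add hexpint
    have h1 : 0 ≤ ∫ ω, (u ω + Real.exp (-u ω) - 1) ∂μ := by
      refine integral_nonneg fun ω => ?_
      simp only [Pi.zero_apply]
      nlinarith [Real.add_one_le_exp (-u ω)]
    rw [integral_sub hadd (integrable_const 1), integral_add huint hexpint] at h1
    simpa using h1
  simp only [sub_zero]
  set h : ℝ → ℝ := fun x =>
    (1 / 2) * ∫ ω, (u ω) ^ 2 * Real.exp (-(u ω) * |x|) * (|x - 1| - |x|) ∂μ with hhdef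
  have hhint : Integrable h := by
    exact ((prod_integrable u hu hupos huint).integral_prod_right).const_mul (1 / 2)
  have hval : ∫ x : ℝ, h x = (∫ ω, u ω ∂μ) + (∫ ω, Real.exp (-u ω) ∂μ) - 1 := by
    rw [hhdef, integral_const_mul, integral_h u hu hupos huint]
    ring
  by_cases hFi : Integrable (fun x : ℝ =>
      ((1 / 2) * ∫ ω, u ω * Real.exp (-(u ω) * |x|) ∂μ) *
        Real.log (((1 / 2) * ∫ ω, u ω * Real.exp (-(u ω) * |x|) ∂μ) /
          ((1 / 2) * ∫ ω, u ω * Real.exp (-(u ω) * |x - 1|) ∂μ))) volume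
  · have hne : ∀ᵐ x : ℝ, x ≠ 0 := by
      rw [ae_iff]
      simp only [ne_eq, not_not]
      simp [Real.volume_singleton]
    have hae : ∀ᵐ x : ℝ,
        ((1 / 2) * ∫ ω, u ω * Real.exp (-(u ω) * |x|) ∂μ) *
          Real.log (((1 / 2) * ∫ ω, u ω * Real.exp (-(u ω) * |x|) ∂μ) /
            ((1 / 2) * ∫ ω, u ω * Real.exp (-(u ω) * |x - 1|) ∂μ)) ≤ h x := by
      filter_upwards [hne] with x hx
      have hls := logsum u hu hupos huint hx
      have hdiv : ((1 / 2 : ℝ) * ∫ ω, u ω * Real.exp (-(u ω) * |x|) ∂μ) /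
          ((1 / 2) * ∫ ω, u ω * Real.exp (-(u ω) * |x - 1|) ∂μ)
          = (∫ ω, u ω * Real.exp (-(u ω) * |x|) ∂μ) /
            (∫ ω, u ω * Real.exp (-(u ω) * |x - 1|) ∂μ) :=
        mul_div_mul_left _ _ (by norm_num)
      rw [hdiv, hhdef]
      simp only
      linarith [hls]
    calc (∫ x : ℝ, ((1 / 2) * ∫ ω, u ω * Real.exp (-(u ω) * |x|) ∂μ) *
          Real.log (((1 / 2) * ∫ ω, u ω * Real.exp (-(u ω) * |x|) ∂μ) /
            ((1 / 2) * ∫ ω, u ω * Real.exp (-(u ω) * |x - 1|) ∂μ)))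
        ≤ ∫ x : ℝ, h x := integral_mono_ae hFi hhint hae
      _ = _ := hval
  · rw [integral_undef hFi]
    exact hRHS0
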